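/- For the tamed (EnKF) Euler–Maruyama scheme (v_n), every iterate v_n is square-integrable and for every N ≥ 0 one has the energy estimate E[v_N²] + h · Σ_{n=0}^{N−1} E[ v_n⁴ / (1 + h·v_n²)² ] ≤ E[v_0²]. In particular E[v_n²] ≤ E[v_0²] for all n. -/

import Mathlib

open MeasureTheory ProbabilityTheory Real Set
open scoped NNReal ENNReal

lemma aux_sq_exp_integrable {b : ℝ} (hb : 0 < b) :
    Integrable (fun x : ℝ => x ^ 2 * Real.exp (-b * x ^ 2)) := by
  have := integrable_rpow_mul_exp_neg_mul_sq hb (s := 2) (by norm_num)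
  simpa [Real.rpow_two] using this

lemma aux_integral_sq_exp {b : ℝ} (hb : 0 < b) :
    ∫ x : ℝ, x ^ 2 * Real.exp (-b * x ^ 2) = (1 / b) ^ ((3:ℝ)/2) * (Real.sqrt π / 2) := by
  have h1 : ∫ x : ℝ, x ^ 2 * Real.exp (-b * x ^ 2)
      = 2 * ∫ x in Ioi (0:ℝ), x ^ 2 * Real.exp (-b * x ^ 2) := by
    rw [← integral_comp_abs (f := fun x => x ^ 2 * Real.exp (-b * x ^ 2))]
    congr 1; ext x; rw [sq_abs]
  have h2 := integral_comp_rpow_Ioi_of_pos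
    (g := fun y : ℝ => y ^ ((1:ℝ)/2) * Real.exp (-(b * y))) (p := 2) zero_lt_two
  have h3 : ∫ x in Ioi (0:ℝ), (2 * x ^ ((2:ℝ) - 1)) •
      ((x ^ (2:ℝ)) ^ ((1:ℝ)/2) * Real.exp (-(b * x ^ (2:ℝ))))
      = ∫ x in Ioi (0:ℝ), 2 * (x ^ 2 * Real.exp (-b * x ^ 2)) := by
    refine setIntegral_congr_fun measurableSet_Ioi (fun x hx => ?_)
    have hx0 : (0:ℝ) < x := hx
    have hsq : (x ^ (2:ℝ)) ^ ((1:ℝ)/2) = x := by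
      rw [← Real.rpow_mul hx0.le]; norm_num
    have h21 : x ^ ((2:ℝ) - 1) = x := by norm_num
    have hx2 : x ^ (2:ℝ) = x ^ 2 := by rw [Real.rpow_two]
    rw [smul_eq_mul, hsq, h21, hx2]
    ring_nf
  have h4 := integral_rpow_mul_exp_neg_mul_Ioi (a := (3:ℝ)/2) (r := b) (by norm_num) hb
  have h5 : ∫ t in Ioi (0:ℝ), t ^ ((3:ℝ)/2 - 1) * Real.exp (-(b * t))
      = ∫ y in Ioi (0:ℝ), y ^ ((1:ℝ)/2) * Real.exp (-(b * y)) := by norm_num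
  have hGamma : Real.Gamma ((3:ℝ)/2) = Real.sqrt π / 2 := by
    rw [show ((3:ℝ)/2) = 1/2 + 1 by norm_num, Real.Gamma_add_one (by norm_num),
      Real.Gamma_one_half_eq]
    ring
  have key : (2:ℝ) * ∫ x in Ioi (0:ℝ), x ^ 2 * Real.exp (-b * x ^ 2)
      = (1 / b) ^ ((3:ℝ)/2) * Real.Gamma ((3:ℝ)/2) := by
    rw [← integral_const_mul, ← h3, h2, ← h5, h4]
  rw [h1, key, hGamma]



lemma aux_pdf_eq {v : ℝ≥0} (x : ℝ) :
    gaussianPDFReal 0 v x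
      = (Real.sqrt (2 * π * v))⁻¹ * Real.exp (-(2*(v:ℝ))⁻¹ * x ^ 2) := by
  rw [gaussianPDFReal]
  congr 2
  rw [sub_zero]
  ring

lemma aux_pdf_meas (v : ℝ≥0) : Measurable fun x => (gaussianPDFReal 0 v x).toNNReal :=
  (measurable_gaussianPDFReal 0 v).real_toNNReal

lemma aux_wd (v : ℝ≥0) (hv : v ≠ 0) : gaussianReal 0 v
    = volume.withDensity (fun x => ((gaussianPDFReal 0 v x).toNNReal : ℝ≥0∞)) := by
  rw [gaussianReal_of_var_ne_zero _ hv]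
  rfl

lemma aux_smul_eq {v : ℝ≥0} (g : ℝ → ℝ) :
    (fun x => (gaussianPDFReal 0 v x).toNNReal • g x)
      = fun x => (Real.sqrt (2 * π * v))⁻¹ * (g x * Real.exp (-(2*(v:ℝ))⁻¹ * x ^ 2)) := by
  funext x
  rw [NNReal.smul_def, Real.coe_toNNReal _ (gaussianPDFReal_nonneg 0 v x), aux_pdf_eq,
    smul_eq_mul]
  ring

lemma aux_gaussian_sq_integrable {v : ℝ≥0} (hv : v ≠ 0) :
    Integrable (fun x : ℝ => x ^ 2) (gaussianReal 0 v) := by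
  have hv' : 0 < (v:ℝ) := by
    have := pos_iff_ne_zero.2 hv
    exact_mod_cast this
  have hb : 0 < (2*(v:ℝ))⁻¹ := by positivity
  rw [aux_wd v hv, integrable_withDensity_iff_integrable_smul (aux_pdf_meas v)]
  rw [aux_smul_eq]
  exact (aux_sq_exp_integrable hb).const_mul _

lemma aux_gaussian_moment2 {v : ℝ≥0} (hv : v ≠ 0) :
    ∫ x, x ^ 2 ∂(gaussianReal 0 v) = v := by
  have hv' : 0 < (v:ℝ) := by
    have := pos_iff_ne_zero.2 hv
    exact_mod_cast this
  have hb : 0 < (2*(v:ℝ))⁻¹ := by positivity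
  rw [aux_wd v hv, integral_withDensity_eq_integral_smul (aux_pdf_meas v), aux_smul_eq,
    integral_const_mul, aux_integral_sq_exp hb]
  have h2v : (0:ℝ) < 2 * v := by positivity
  have hinv : (1:ℝ) / (2*(v:ℝ))⁻¹ = 2 * v := by
    field_simp
  rw [hinv]
  have h32 : ((2*(v:ℝ))) ^ ((3:ℝ)/2) = (2*v) * Real.sqrt (2*v) := by
    rw [show ((3:ℝ)/2) = 1 + 1/2 by norm_num, Real.rpow_add h2v, Real.rpow_one,
      Real.sqrt_eq_rpow]
  have hsqrt : Real.sqrt (2 * π * v) = Real.sqrt (2*v) * Real.sqrt π := by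
    rw [show 2 * π * (v:ℝ) = (2*v) * π by ring, Real.sqrt_mul h2v.le]
  rw [h32, hsqrt]
  have hs : Real.sqrt (2*(v:ℝ)) ≠ 0 := by positivity
  have hp : Real.sqrt π ≠ 0 := by positivity
  have hsq : Real.sqrt (2*(v:ℝ)) * Real.sqrt (2*(v:ℝ)) = 2*v :=
    Real.mul_self_sqrt h2v.le
  field_simp

lemma aux_gaussian_moment1 (v : ℝ≥0) : ∫ x, x ∂(gaussianReal 0 v) = 0 := by
  have hmap : (gaussianReal 0 v).map (fun x => -x) = gaussianReal 0 v := by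
    have h := gaussianReal_map_const_mul (μ := 0) (v := v) (-1)
    have h1 : NNReal.mk ((-1:ℝ)^2) (sq_nonneg _) = 1 := by ext; simp
    rw [h1, one_mul, mul_zero] at h
    rw [← h]
    congr 1
    funext x
    ring
  have h1 : ∫ x, x ∂(gaussianReal 0 v) = ∫ x, -x ∂(gaussianReal 0 v) := by
    conv_lhs => rw [← hmap]
    exact integral_map (φ := fun x : ℝ => -x) measurable_neg.aemeasurable
      (f := fun x : ℝ => x) measurable_id.aestronglyMeasurable
  rw [integral_neg] at h1
  linarith

lemma aux_gaussian_memLp2 {v : ℝ≥0} (hv : v ≠ 0) :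
    MemLp (fun x : ℝ => x) 2 (gaussianReal 0 v) :=
  (memLp_two_iff_integrable_sq measurable_id.aestronglyMeasurable).2
    (aux_gaussian_sq_integrable hv)


lemma enkf_step {Ω : Type*} [MeasurableSpace Ω] (μ : Measure Ω) [IsProbabilityMeasure μ]
    {h : ℝ} (hh : 0 < h) {w X : Ω → ℝ} (hwm : Measurable w) (hXm : Measurable X)
    (hwL2 : MemLp w 2 μ) (hXL2 : MemLp X 2 μ)
    (hXmean : ∫ ω, X ω ∂μ = 0) (hXsq : ∫ ω, (X ω) ^ 2 ∂μ = h)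
    (hind : IndepFun X w μ) :
    (∫ ω, (w ω / (1 + h * (w ω) ^ 2) + X ω * ((w ω) ^ 2 / (1 + h * (w ω) ^ 2))) ^ 2 ∂μ)
      + h * ∫ ω, (w ω) ^ 4 / (1 + h * (w ω) ^ 2) ^ 2 ∂μ
    ≤ ∫ ω, (w ω) ^ 2 ∂μ := by
  have hDpos : ∀ x : ℝ, 0 < 1 + h * x ^ 2 := fun x => by positivity
  set F : Ω → ℝ := fun ω => w ω / (1 + h * (w ω) ^ 2) with hF_def
  set G : Ω → ℝ := fun ω => (w ω) ^ 2 / (1 + h * (w ω) ^ 2) with hG_def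
  have hDm : Measurable fun ω => 1 + h * (w ω) ^ 2 :=
    measurable_const.add (measurable_const.mul (hwm.pow_const 2))
  have hFm : Measurable F := hwm.div hDm
  have hGm : Measurable G := (hwm.pow_const 2).div hDm
  have hFabs : ∀ ω, |F ω| ≤ |w ω| := by
    intro ω
    rw [hF_def, abs_div, abs_of_pos (hDpos (w ω))]
    exact div_le_self (abs_nonneg _) (by nlinarith [sq_nonneg (w ω)])
  have hGnn : ∀ ω, 0 ≤ G ω := fun ω => div_nonneg (sq_nonneg _) (hDpos (w ω)).le
  have hGabs : ∀ ω, |G ω| ≤ 1 / h := by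
    intro ω
    rw [abs_of_nonneg (hGnn ω), hG_def]
    rw [div_le_div_iff₀ (hDpos (w ω)) hh]
    nlinarith [sq_nonneg (w ω)]
  have hFL2 : MemLp F 2 μ :=
    hwL2.of_le hFm.aestronglyMeasurable
      (ae_of_all _ fun ω => by simpa [Real.norm_eq_abs] using hFabs ω)
  have intF2 : Integrable (fun ω => F ω ^ 2) μ := hFL2.integrable_sq
  have intw2 : Integrable (fun ω => w ω ^ 2) μ := hwL2.integrable_sq
  have intw : Integrable w μ := hwL2.integrable one_le_two
  have intG2 : Integrable (fun ω => G ω ^ 2) μ := by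
    refine Integrable.mono' (integrable_const ((1/h) ^ 2))
      ((hGm.pow_const 2).aestronglyMeasurable) (ae_of_all _ fun ω => ?_)
    rw [Real.norm_eq_abs, abs_pow]
    exact pow_le_pow_left₀ (abs_nonneg _) (hGabs ω) 2
  have intFG : Integrable (fun ω => F ω * G ω) μ := by
    refine Integrable.mono' ((intw.abs.const_mul (1/h)))
      ((hFm.mul hGm).aestronglyMeasurable) (ae_of_all _ fun ω => ?_)
    rw [Real.norm_eq_abs, abs_mul]
    calc |F ω| * |G ω| ≤ |w ω| * (1/h) :=
          mul_le_mul (hFabs ω) (hGabs ω) (abs_nonneg _) (abs_nonneg _)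
      _ = 1/h * |w ω| := by ring
  have intX : Integrable X μ := hXL2.integrable one_le_two
  have intX2 : Integrable (fun ω => X ω ^ 2) μ := hXL2.integrable_sq
  have hiFG : IndepFun X (fun ω => F ω * G ω) μ := by
    have := hind.comp measurable_id
      (show Measurable (fun x : ℝ => (x / (1 + h * x ^ 2)) * (x ^ 2 / (1 + h * x ^ 2))) by
        have hd : Measurable fun x : ℝ => 1 + h * x ^ 2 :=
          measurable_const.add (measurable_const.mul (measurable_id.pow_const 2))
        exact (measurable_id.div hd).mul ((measurable_id.pow_const 2).div hd))
    exact this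
  have hiX2G2 : IndepFun (fun ω => X ω ^ 2) (fun ω => G ω ^ 2) μ := by
    have := hind.comp (measurable_id.pow_const 2)
      (show Measurable (fun x : ℝ => (x ^ 2 / (1 + h * x ^ 2)) ^ 2) by
        have hd : Measurable fun x : ℝ => 1 + h * x ^ 2 :=
          measurable_const.add (measurable_const.mul (measurable_id.pow_const 2))
        exact ((measurable_id.pow_const 2).div hd).pow_const 2)
    exact this
  have intXFG : Integrable (fun ω => X ω * (F ω * G ω)) μ := hiFG.integrable_mul intX intFG
  have intX2G2 : Integrable (fun ω => X ω ^ 2 * G ω ^ 2) μ := hiX2G2.integrable_mul intX2 intG2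
  have E1 : ∫ ω, X ω * (F ω * G ω) ∂μ = 0 := by
    have e := hiFG.integral_fun_mul_eq_mul_integral intX.aestronglyMeasurable intFG.aestronglyMeasurable
    rw [hXmean, zero_mul] at e
    exact e
  have E2 : ∫ ω, X ω ^ 2 * G ω ^ 2 ∂μ = h * ∫ ω, G ω ^ 2 ∂μ := by
    have e := hiX2G2.integral_fun_mul_eq_mul_integral intX2.aestronglyMeasurable intG2.aestronglyMeasurable
    rw [hXsq] at e
    exact e
  have hexp : (fun ω => (F ω + X ω * G ω) ^ 2)
      = fun ω => F ω ^ 2 + (2 * (X ω * (F ω * G ω)) + X ω ^ 2 * G ω ^ 2) :=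
    funext fun ω => by ring
  have h1 : ∫ ω, (F ω + X ω * G ω) ^ 2 ∂μ
      = (∫ ω, F ω ^ 2 ∂μ) + h * ∫ ω, G ω ^ 2 ∂μ := by
    have int2XFG : Integrable (fun ω => 2 * (X ω * (F ω * G ω))) μ := by
      exact intXFG.const_mul 2
    have intRest : Integrable (fun ω => 2 * (X ω * (F ω * G ω)) + X ω ^ 2 * G ω ^ 2) μ := by
      exact int2XFG.add intX2G2
    rw [hexp, integral_add intF2 intRest, integral_add int2XFG intX2G2,
      integral_const_mul, E1, E2]
    ring
  have hptw : ∀ ω, F ω ^ 2 + (2 * h) * G ω ^ 2 ≤ w ω ^ 2 := by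
    intro ω
    have hD := hDpos (w ω)
    rw [hF_def, hG_def]
    rw [div_pow, div_pow, ← mul_div_assoc, ← add_div, div_le_iff₀ (by positivity)]
    nlinarith [sq_nonneg (h * (w ω) ^ 3), sq_nonneg (w ω)]
  have h2 : (∫ ω, F ω ^ 2 ∂μ) + (2 * h) * ∫ ω, G ω ^ 2 ∂μ ≤ ∫ ω, w ω ^ 2 ∂μ := by
    have int2hG2 : Integrable (fun ω => (2 * h) * G ω ^ 2) μ := by
      exact intG2.const_mul (2 * h)
    have intSum : Integrable (fun ω => F ω ^ 2 + (2 * h) * G ω ^ 2) μ := by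
      exact intF2.add int2hG2
    rw [← integral_const_mul, ← integral_add intF2 int2hG2]
    exact integral_mono intSum intw2 hptw
  have hG4 : ∫ ω, (w ω) ^ 4 / (1 + h * (w ω) ^ 2) ^ 2 ∂μ = ∫ ω, G ω ^ 2 ∂μ := by
    congr 1
    funext ω
    rw [hG_def, div_pow]
    norm_num [← pow_mul]
  rw [hG4]
  calc (∫ ω, (F ω + X ω * G ω) ^ 2 ∂μ) + h * ∫ ω, G ω ^ 2 ∂μ
      = (∫ ω, F ω ^ 2 ∂μ) + (2 * h) * ∫ ω, G ω ^ 2 ∂μ := by rw [h1]; ring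
    _ ≤ ∫ ω, w ω ^ 2 ∂μ := h2



/-- Energy estimate for the tamed (EnKF) Euler–Maruyama scheme
`v_{n+1} = v_n - h·v_n³/(1+hv_n²) + ξ_{n+1}·v_n²/(1+hv_n²)` with i.i.d.-type Gaussian
increments `ξ_{n+1} ~ N(0,h)` independent of the past: every iterate is square-integrable,
`E[v_N²] + h·Σ_{n<N} E[v_n⁴/(1+hv_n²)²] ≤ E[v_0²]`, and in particular
`E[v_n²] ≤ E[v_0²]` for all `n`. -/
theorem enkf_scheme_energy_estimate
    {Ω : Type*} [MeasurableSpace Ω] (μ : Measure Ω) [IsProbabilityMeasure μ]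
    (h : ℝ) (hh : 0 < h)
    (v₀ : Ω → ℝ) (hv₀m : Measurable v₀) (hv₀L2 : MemLp v₀ 2 μ)
    (ξ : ℕ → Ω → ℝ) (hξm : ∀ n, Measurable (ξ n))
    (hlaw : ∀ n : ℕ, Measure.map (ξ (n + 1)) μ = gaussianReal 0 h.toNNReal)
    (hindep : ∀ n : ℕ, Indep
      (MeasurableSpace.comap (ξ (n + 1)) inferInstance)
      ((MeasurableSpace.comap v₀ inferInstance)
        ⊔ ⨆ i ∈ Finset.Icc 1 n, MeasurableSpace.comap (ξ i) inferInstance) μ)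
    (v : ℕ → Ω → ℝ) (hv0 : v 0 = v₀)
    (hrec : ∀ n ω, v (n + 1) ω
      = v n ω - h * ((v n ω) ^ 3 / (1 + h * (v n ω) ^ 2))
        + ξ (n + 1) ω * ((v n ω) ^ 2 / (1 + h * (v n ω) ^ 2))) :
    (∀ n, MemLp (v n) 2 μ)
    ∧ (∀ N : ℕ,
        (∫ ω, (v N ω) ^ 2 ∂μ)
          + h * ∑ n ∈ Finset.range N, ∫ ω, (v n ω) ^ 4 / (1 + h * (v n ω) ^ 2) ^ 2 ∂μ
        ≤ ∫ ω, (v₀ ω) ^ 2 ∂μ)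
    ∧ (∀ n : ℕ, ∫ ω, (v n ω) ^ 2 ∂μ ≤ ∫ ω, (v₀ ω) ^ 2 ∂μ) := by
  have hvNN : h.toNNReal ≠ 0 := (Real.toNNReal_pos.mpr hh).ne'
  -- square integrability and moments of the noise
  have hξL2 : ∀ n : ℕ, MemLp (ξ (n + 1)) 2 μ := by
    intro n
    have hmem := aux_gaussian_memLp2 (v := h.toNNReal) hvNN
    rw [← hlaw n] at hmem
    exact (memLp_map_measure_iff measurable_id.aestronglyMeasurable
      (hξm (n + 1)).aemeasurable).1 hmem
  have hξmean : ∀ n : ℕ, ∫ ω, ξ (n + 1) ω ∂μ = 0 := by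
    intro n
    have e := aux_gaussian_moment1 h.toNNReal
    rw [← hlaw n, integral_map (hξm (n + 1)).aemeasurable
      (f := fun x : ℝ => x) measurable_id.aestronglyMeasurable] at e
    exact e
  have hξsq : ∀ n : ℕ, ∫ ω, (ξ (n + 1) ω) ^ 2 ∂μ = h := by
    intro n
    have e := aux_gaussian_moment2 (v := h.toNNReal) hvNN
    rw [← hlaw n, integral_map (hξm (n + 1)).aemeasurable
      (f := fun x : ℝ => x ^ 2) (measurable_id.pow_const 2).aestronglyMeasurable] at e
    rw [e]
    exact Real.coe_toNNReal h hh.le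
  -- measurability of the iterates
  have hvm : ∀ n, Measurable (v n) := by
    intro n
    induction n with
    | zero => rw [hv0]; exact hv₀m
    | succ n ih =>
      rw [show v (n + 1) = fun ω => v n ω - h * ((v n ω) ^ 3 / (1 + h * (v n ω) ^ 2))
          + ξ (n + 1) ω * ((v n ω) ^ 2 / (1 + h * (v n ω) ^ 2)) from funext (hrec n)]
      have hD : Measurable fun ω => 1 + h * (v n ω) ^ 2 :=
        measurable_const.add (measurable_const.mul (ih.pow_const 2))
      exact (ih.sub (measurable_const.mul ((ih.pow_const 3).div hD))).add
        ((hξm (n + 1)).mul ((ih.pow_const 2).div hD))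
  -- measurability with respect to the past filtration
  have hvG : ∀ n m : ℕ, n ≤ m → Measurable[
      (MeasurableSpace.comap v₀ inferInstance)
        ⊔ ⨆ i ∈ Finset.Icc 1 m, MeasurableSpace.comap (ξ i) inferInstance] (v n) := by
    intro n
    induction n with
    | zero =>
      intro m _
      rw [hv0]
      exact measurable_iff_comap_le.2 le_sup_left
    | succ n ih =>
      intro m hm
      have h1 := ih m (Nat.le_of_succ_le hm)
      have h2 : Measurable[
          (MeasurableSpace.comap v₀ inferInstance)
            ⊔ ⨆ i ∈ Finset.Icc 1 m, MeasurableSpace.comap (ξ i) inferInstance] (ξ (n + 1)) := by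
        refine measurable_iff_comap_le.2 (le_trans ?_ le_sup_right)
        exact le_biSup (fun i => MeasurableSpace.comap (ξ i) inferInstance)
          (Finset.mem_Icc.mpr ⟨Nat.succ_le_succ (Nat.zero_le n), hm⟩)
      rw [show v (n + 1) = fun ω => v n ω - h * ((v n ω) ^ 3 / (1 + h * (v n ω) ^ 2))
          + ξ (n + 1) ω * ((v n ω) ^ 2 / (1 + h * (v n ω) ^ 2)) from funext (hrec n)]
      have hD : Measurable[(MeasurableSpace.comap v₀ inferInstance)
          ⊔ ⨆ i ∈ Finset.Icc 1 m, MeasurableSpace.comap (ξ i) inferInstance]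
          fun ω => 1 + h * (v n ω) ^ 2 :=
        measurable_const.add (measurable_const.mul (h1.pow_const 2))
      exact (h1.sub (measurable_const.mul ((h1.pow_const 3).div hD))).add
        (h2.mul ((h1.pow_const 2).div hD))
  -- independence of increments from iterates
  have hIndepF : ∀ n, IndepFun (ξ (n + 1)) (v n) μ := by
    intro n
    have h1 : Indep (MeasurableSpace.comap (ξ (n + 1)) inferInstance)
        (MeasurableSpace.comap (v n) inferInstance) μ :=
      indep_of_indep_of_le_right (hindep n) (measurable_iff_comap_le.1 (hvG n n le_rfl))
    exact h1
  -- rewriting the recursion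
  have hDpos : ∀ x : ℝ, 0 < 1 + h * x ^ 2 := fun x => by positivity
  have hid : ∀ n ω, v (n + 1) ω
      = v n ω / (1 + h * (v n ω) ^ 2)
        + ξ (n + 1) ω * ((v n ω) ^ 2 / (1 + h * (v n ω) ^ 2)) := by
    intro n ω
    rw [hrec]
    have hD := (hDpos (v n ω)).ne'
    field_simp
    ring
  -- L2 bounds
  have hL2 : ∀ n, MemLp (v n) 2 μ := by
    intro n
    induction n with
    | zero => rw [hv0]; exact hv₀L2
    | succ n ih =>
      have hD : Measurable fun ω => 1 + h * (v n ω) ^ 2 :=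
        measurable_const.add (measurable_const.mul ((hvm n).pow_const 2))
      have hF : MemLp (fun ω => v n ω / (1 + h * (v n ω) ^ 2)) 2 μ := by
        refine ih.of_le ((hvm n).div hD).aestronglyMeasurable (ae_of_all _ fun ω => ?_)
        rw [Real.norm_eq_abs, Real.norm_eq_abs, abs_div, abs_of_pos (hDpos (v n ω))]
        exact div_le_self (abs_nonneg _) (by nlinarith [sq_nonneg (v n ω)])
      have hXG : MemLp (fun ω => ξ (n + 1) ω * ((v n ω) ^ 2 / (1 + h * (v n ω) ^ 2))) 2 μ := by
        refine MemLp.of_le ((hξL2 n).const_mul (1 / h))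
          (((hξm (n + 1)).mul (((hvm n).pow_const 2).div hD)).aestronglyMeasurable)
          (ae_of_all _ fun ω => ?_)
        rw [Real.norm_eq_abs, Real.norm_eq_abs, abs_mul, abs_mul]
        have hG : |(v n ω) ^ 2 / (1 + h * (v n ω) ^ 2)| ≤ 1 / h := by
          rw [abs_of_nonneg (div_nonneg (sq_nonneg _) (hDpos (v n ω)).le),
            div_le_div_iff₀ (hDpos (v n ω)) hh]
          nlinarith [sq_nonneg (v n ω)]
        calc |ξ (n + 1) ω| * |(v n ω) ^ 2 / (1 + h * (v n ω) ^ 2)|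
            ≤ |ξ (n + 1) ω| * (1 / h) :=
              mul_le_mul_of_nonneg_left hG (abs_nonneg _)
          _ ≤ |1 / h| * |ξ (n + 1) ω| := by
              rw [abs_of_pos (by positivity : (0:ℝ) < 1 / h)]; ring_nf; exact le_refl _
      rw [show v (n + 1) = fun ω => v n ω / (1 + h * (v n ω) ^ 2)
          + ξ (n + 1) ω * ((v n ω) ^ 2 / (1 + h * (v n ω) ^ 2)) from funext (hid n)]
      exact hF.add hXG
  -- one-step energy estimate
  have hstep : ∀ n, (∫ ω, (v (n + 1) ω) ^ 2 ∂μ)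
      + h * ∫ ω, (v n ω) ^ 4 / (1 + h * (v n ω) ^ 2) ^ 2 ∂μ ≤ ∫ ω, (v n ω) ^ 2 ∂μ := by
    intro n
    have := enkf_step μ hh (hvm n) (hξm (n + 1)) (hL2 n) (hξL2 n)
      (hξmean n) (hξsq n) (hIndepF n)
    rwa [show (∫ ω, (v n ω / (1 + h * (v n ω) ^ 2)
        + ξ (n + 1) ω * ((v n ω) ^ 2 / (1 + h * (v n ω) ^ 2))) ^ 2 ∂μ)
        = ∫ ω, (v (n + 1) ω) ^ 2 ∂μ from by
      congr 1; funext ω; rw [hid n ω]] at this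
  -- telescoping
  have hmain : ∀ N : ℕ,
      (∫ ω, (v N ω) ^ 2 ∂μ)
        + h * ∑ n ∈ Finset.range N, ∫ ω, (v n ω) ^ 4 / (1 + h * (v n ω) ^ 2) ^ 2 ∂μ
      ≤ ∫ ω, (v₀ ω) ^ 2 ∂μ := by
    intro N
    induction N with
    | zero => simp [hv0]
    | succ N ih =>
      rw [Finset.sum_range_succ, mul_add]
      have := hstep N
      calc (∫ ω, (v (N + 1) ω) ^ 2 ∂μ)
          + (h * ∑ n ∈ Finset.range N, ∫ ω, (v n ω) ^ 4 / (1 + h * (v n ω) ^ 2) ^ 2 ∂μ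
            + h * ∫ ω, (v N ω) ^ 4 / (1 + h * (v N ω) ^ 2) ^ 2 ∂μ)
          = ((∫ ω, (v (N + 1) ω) ^ 2 ∂μ)
              + h * ∫ ω, (v N ω) ^ 4 / (1 + h * (v N ω) ^ 2) ^ 2 ∂μ)
            + h * ∑ n ∈ Finset.range N, ∫ ω, (v n ω) ^ 4 / (1 + h * (v n ω) ^ 2) ^ 2 ∂μ := by
              ring
        _ ≤ (∫ ω, (v N ω) ^ 2 ∂μ)
            + h * ∑ n ∈ Finset.range N, ∫ ω, (v n ω) ^ 4 / (1 + h * (v n ω) ^ 2) ^ 2 ∂μ := by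
              exact add_le_add_left this _
        _ ≤ ∫ ω, (v₀ ω) ^ 2 ∂μ := ih
  refine ⟨hL2, hmain, fun n => ?_⟩
  have hnn : 0 ≤ h * ∑ k ∈ Finset.range n, ∫ ω, (v k ω) ^ 4 / (1 + h * (v k ω) ^ 2) ^ 2 ∂μ := by
    refine mul_nonneg hh.le (Finset.sum_nonneg fun k _ => ?_)
    exact integral_nonneg fun ω => div_nonneg (by positivity) (by positivity)
  linarith [hmain n]
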